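/- arXiv:1505.05292 — 3 statements merged into one kernel-verified Lean document; each statement's English description precedes it below -/
import Mathlib

section
/- Let X(t,x) be a map from [0,T]×ℝⁿ to ℝⁿ such that there exists C ≥ 0 with X(t,·)_#λⁿ ≤ C·λⁿ for all t ∈ [0,T] (where λⁿ is Lebesgue measure and _# denotes pushforward). Then for any Lebesgue-negligible Borel set N ⊆ (0,T)×ℝⁿ, for λⁿ-a.e. x ∈ ℝⁿ the set {t ∈ (0,T) : (t, X(t,x)) ∈ N} is λ¹-negligible. -/
open MeasureTheory Set
open scoped NNReal ENNReal

/-- If `X : [0,T] × ℝⁿ → ℝⁿ` is measurable and satisfies the compressibility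
bound `X(t,·)_# λⁿ ≤ C λⁿ` for all `t ∈ [0,T]`, then for every Lebesgue-negligible Borel
set `N ⊆ (0,T) × ℝⁿ`, for a.e. `x` the set `{t ∈ (0,T) : (t, X t x) ∈ N}` is negligible. -/
theorem stmt0 {n : ℕ} (T : ℝ) (hT : 0 < T)
    (X : ℝ → (Fin n → ℝ) → (Fin n → ℝ))
    (hXmeas : Measurable (Function.uncurry X))
    (C : ℝ≥0) (hC : ∀ t ∈ Icc (0:ℝ) T,
      Measure.map (X t) (volume : Measure (Fin n → ℝ)) ≤ (C : ℝ≥0∞) • volume)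
    (N : Set (ℝ × (Fin n → ℝ))) (hNmeas : MeasurableSet N)
    (hNsub : N ⊆ (Ioo 0 T) ×ˢ univ)
    (hNnull : (volume : Measure (ℝ × (Fin n → ℝ))) N = 0) :
    ∀ᵐ x ∂(volume : Measure (Fin n → ℝ)),
      (volume : Measure ℝ) {t ∈ Ioo 0 T | (t, X t x) ∈ N} = 0 := by
  have hφ : Measurable (fun p : (Fin n → ℝ) × ℝ => (p.2, X p.2 p.1)) :=
    measurable_snd.prodMk (hXmeas.comp (measurable_snd.prodMk measurable_fst))
  set f : (Fin n → ℝ) × ℝ → ℝ≥0∞ := fun p => N.indicator 1 (p.2, X p.2 p.1) with hf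
  have hfmeas : Measurable f := (measurable_one.indicator hNmeas).comp hφ
  have hXt : ∀ t, Measurable (X t) := fun t =>
    hXmeas.comp (measurable_const.prodMk measurable_id)
  have key : ∫⁻ x, ∫⁻ t, f (x, t) ∂volume ∂volume = 0 := by
    rw [lintegral_lintegral_swap hfmeas.aemeasurable]
    have hbound : ∀ t, ∫⁻ x, f (x, t) ∂volume ≤ C * volume (Prod.mk t ⁻¹' N) := by
      intro t
      by_cases ht : t ∈ Icc (0:ℝ) T
      · have heq : ∀ x, f (x, t) = (Prod.mk t ⁻¹' N).indicator 1 (X t x) := by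
          intro x; rfl
        simp_rw [heq]
        rw [← lintegral_map (measurable_one.indicator (measurable_prodMk_left hNmeas)) (hXt t)]
        calc ∫⁻ y, (Prod.mk t ⁻¹' N).indicator 1 y ∂(Measure.map (X t) volume)
            ≤ ∫⁻ y, (Prod.mk t ⁻¹' N).indicator 1 y ∂((C:ℝ≥0∞) • volume) :=
              lintegral_mono' (hC t ht) le_rfl
          _ = C * volume (Prod.mk t ⁻¹' N) := by
              rw [lintegral_smul_measure,
                lintegral_indicator_one (measurable_prodMk_left hNmeas), smul_eq_mul]
      · have heq : ∀ x, f (x, t) = 0 := by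
          intro x
          simp only [hf, Set.indicator_apply_eq_zero]
          intro hmem
          exact absurd ((hNsub hmem).1) (fun h => ht ⟨h.1.le, h.2.le⟩)
        simp [heq]
    have hNprod : (volume : Measure (ℝ × (Fin n → ℝ))) N
        = ∫⁻ t, volume (Prod.mk t ⁻¹' N) ∂volume := by
      rw [Measure.volume_eq_prod, Measure.prod_apply hNmeas]
    have hle : ∫⁻ t, ∫⁻ x, f (x, t) ∂volume ∂volume ≤ 0 :=
      calc ∫⁻ t, ∫⁻ x, f (x, t) ∂volume ∂volume
          ≤ ∫⁻ t, C * volume (Prod.mk t ⁻¹' N) ∂volume := lintegral_mono hbound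
        _ = C * ∫⁻ t, volume (Prod.mk t ⁻¹' N) ∂volume :=
            lintegral_const_mul' _ _ (by simp)
        _ = C * volume N := by rw [hNprod]
        _ = 0 := by rw [hNnull, mul_zero]
    exact le_antisymm hle (zero_le)
  have gmeas : Measurable fun x => ∫⁻ t, f (x, t) ∂(volume : Measure ℝ) :=
    Measurable.lintegral_prod_right' hfmeas
  have := (lintegral_eq_zero_iff gmeas).mp key
  filter_upwards [this] with x hx
  have hmeasS : MeasurableSet ((fun t => (t, X t x)) ⁻¹' N) :=
    hNmeas.preimage (measurable_id.prodMk
      (hXmeas.comp (measurable_id.prodMk measurable_const)))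
  have hgx : ∫⁻ t, f (x, t) ∂(volume : Measure ℝ)
      = volume ((fun t => (t, X t x)) ⁻¹' N) := by
    rw [← lintegral_indicator_one hmeasS]
    congr 1
  have hsets : {t ∈ Ioo 0 T | (t, X t x) ∈ N} = (fun t => (t, X t x)) ⁻¹' N := by
    ext t
    simp only [mem_setOf_eq, mem_sep_iff, mem_preimage]
    exact ⟨fun h => h.2, fun h => ⟨(hNsub h).1, h⟩⟩
  rw [hsets, ← hgx, hx]; rfl
end

section
/- Lions' lemma (generalized Lax–Milgram): Let V be a normed space and H a Hilbert space with V continuously embedded in H, ‖v‖_H ≤ ‖v‖_V for all v ∈ V. Let B : V × H → ℝ be bilinear with B(v,·) continuous on H for every v ∈ V, and coercive: there is c > 0 with B(v,v) ≥ c‖v‖_V² for all v ∈ V. Then for every continuous linear functional ℓ ∈ V' there exists h ∈ H such that B(v,h) = ℓ(v) for all v ∈ V, and ‖h‖_H ≤ ‖ℓ‖_{V'}/c. -/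
open scoped RealInnerProductSpace

/-- Lions' lemma (generalized Lax–Milgram). `V` a normed space continuously
embedded (via `J`, with `‖J v‖ ≤ ‖v‖`) in a Hilbert space `H`; `B : V × H → ℝ` bilinear
(linear in `v`, continuous linear in `h`) and coercive (`B v (J v) ≥ c ‖v‖²`). Then any
`ℓ ∈ V'` is represented by some `h ∈ H` with `‖h‖ ≤ ‖ℓ‖ / c`. -/
theorem stmt1
    (V : Type*) [NormedAddCommGroup V] [NormedSpace ℝ V]
    (H : Type*) [NormedAddCommGroup H] [InnerProductSpace ℝ H] [CompleteSpace H]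
    (J : V →ₗ[ℝ] H) (hJ : ∀ v : V, ‖J v‖ ≤ ‖v‖)
    (B : V →ₗ[ℝ] H →L[ℝ] ℝ)
    (c : ℝ) (hc : 0 < c)
    (hcoer : ∀ v : V, c * ‖v‖ ^ 2 ≤ B v (J v))
    (ℓ : V →L[ℝ] ℝ) :
    ∃ h : H, (∀ v : V, B v h = ℓ v) ∧ ‖h‖ ≤ ‖ℓ‖ / c := by
  set D := InnerProductSpace.toDual ℝ H with hD
  -- the "representing" map T : V → H with B v h = ⟪T v, h⟫
  let T : V →ₗ[ℝ] H :=
  { toFun := fun v => D.symm (B v)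
    map_add' := by intro x y; simp
    map_smul' := by intro r x; simp }
  have hBT : ∀ v (h : H), B v h = ⟪T v, h⟫ := by
    intro v h
    show (B v) h = ⟪D.symm (B v), h⟫
    rw [hD]
    exact (InnerProductSpace.toDual_symm_apply).symm
  have hT : ∀ v : V, c * ‖v‖ ≤ ‖T v‖ := by
    intro v
    rcases eq_or_ne v 0 with rfl | hv
    · simp
    have h1 : c * ‖v‖ * ‖v‖ ≤ ‖T v‖ * ‖v‖ := by
      calc c * ‖v‖ * ‖v‖ = c * ‖v‖ ^ 2 := by ring
        _ ≤ B v (J v) := hcoer v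
        _ = ⟪T v, J v⟫ := hBT v (J v)
        _ ≤ ‖T v‖ * ‖J v‖ := real_inner_le_norm _ _
        _ ≤ ‖T v‖ * ‖v‖ := by
            exact mul_le_mul_of_nonneg_left (hJ v) (norm_nonneg _)
    exact le_of_mul_le_mul_right h1 (norm_pos_iff.mpr hv)
  have hinj : Function.Injective T := by
    rw [← LinearMap.ker_eq_bot, LinearMap.ker_eq_bot']
    intro v hv
    by_contra hv0
    have := hT v
    rw [hv, norm_zero] at this
    have : ‖v‖ ≤ 0 := by
      nlinarith [norm_pos_iff.mpr hv0]
    exact hv0 (norm_eq_zero.mp (le_antisymm this (norm_nonneg _)))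
  let e : V ≃ₗ[ℝ] LinearMap.range T := LinearEquiv.ofInjective T hinj
  let f₀ : LinearMap.range T →ₗ[ℝ] ℝ := ℓ.toLinearMap.comp e.symm.toLinearMap
  have hbound : ∀ w : LinearMap.range T, ‖f₀ w‖ ≤ (‖ℓ‖ / c) * ‖w‖ := by
    intro w
    set v := e.symm w with hv
    have hw : (w : H) = T v := by
      have : e v = w := by rw [hv]; exact e.apply_symm_apply w
      rw [← this]
      rfl
    have h0 : ‖f₀ w‖ = ‖ℓ v‖ := rfl
    have h1 : ‖ℓ v‖ ≤ ‖ℓ‖ * ‖v‖ := ℓ.le_opNorm v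
    have h2 : c * ‖v‖ ≤ ‖(w : H)‖ := by rw [hw]; exact hT v
    have h3 : ‖v‖ ≤ ‖(w : H)‖ / c := by
      rw [le_div_iff₀ hc]; linarith
    calc ‖f₀ w‖ = ‖ℓ v‖ := h0
      _ ≤ ‖ℓ‖ * ‖v‖ := h1
      _ ≤ ‖ℓ‖ * (‖(w : H)‖ / c) := by
          exact mul_le_mul_of_nonneg_left h3 (norm_nonneg _)
      _ = (‖ℓ‖ / c) * ‖(w : H)‖ := by ring
  let f : LinearMap.range T →L[ℝ] ℝ := f₀.mkContinuous (‖ℓ‖ / c) hbound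
  have hfnorm : ‖f‖ ≤ ‖ℓ‖ / c :=
    f₀.mkContinuous_norm_le (div_nonneg (norm_nonneg _) hc.le) hbound
  obtain ⟨g, hg, hgnorm⟩ := exists_extension_norm_eq (LinearMap.range T) f
  refine ⟨D.symm g, ?_, ?_⟩
  · intro v
    have h1 : B v (D.symm g) = ⟪T v, D.symm g⟫ := hBT v _
    have h2 : ⟪T v, D.symm g⟫ = ⟪D.symm g, T v⟫ := real_inner_comm _ _
    have h3 : ⟪D.symm g, T v⟫ = g (T v) := by
      rw [hD]
      exact InnerProductSpace.toDual_symm_apply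
    have h4 : g (T v) = f₀ (e v) := by
      have := hg (e v)
      have he : ((e v : LinearMap.range T) : H) = T v := rfl
      rw [← he]
      exact this
    have h5 : f₀ (e v) = ℓ v := by
      show ℓ (e.symm (e v)) = ℓ v
      rw [e.symm_apply_apply]
    rw [h1, h2, h3, h4, h5]
  · have : ‖(D.symm g : H)‖ = ‖g‖ := D.symm.norm_map g
    rw [this, hgnorm]
    exact hfnorm
end

section
/- Let η be a Borel probability measure on C([0,T]; X) (X a Polish space) concentrated on curves η such that for every f in a fixed countable family A* of 1-Lipschitz-like functions (|b_t(f)| ≤ |b_t|_* everywhere), f∘η is absolutely continuous with (f∘η)'(t) = b_t(f)(η(t)) a.e. Assume |b| ∈ L¹((0,T); L^p(X,𝔪)) and (e_t)_#η = u_t 𝔪 with u ∈ L^∞((0,T); L^{p'}). Then η-a.e. curve η is absolutely continuous with respect to the distance d_{A*}(x,y) := sup_{f∈A*}|f(x)−f(y)|, with metric speed |η̇|(t) ≤ |b_t|_*(η(t)) for a.e. t, where |b_t|_* := sup_{f∈A*}|b_t(f)|. -/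
open MeasureTheory Set
open scoped ENNReal

/-- Let `η` (here a process `(Ω,P,γ)` with continuous paths in a Polish space
`X`) be concentrated on curves along which each `f = F i` of a countable family `A*` is
absolutely continuous with `(f∘η)' = b_t(f)(η(t)) = G i t (η t)` a.e., where
`|G i t x| ≤ B t x = |b_t|_*(x) = sup_i |G i t x|`.  Assume `|b| = B ∈ L¹((0,T);L^p(𝔪))`
and the marginals are `u_t 𝔪` with `u ∈ L^∞((0,T);L^{p'})`.  Then a.e. curve is absolutely
continuous for the sup-distance `d_{A*}(x,y) = sup_i |F i x − F i y|`, with metric speed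
bounded by `B` along the curve: `d_{A*}(γ_s, γ_t) ≤ ∫_s^t B_r(γ_r) dr`. -/
theorem stmt13
    {X : Type*} [MetricSpace X] [TopologicalSpace.SeparableSpace X] [CompleteSpace X]
    [MeasurableSpace X] [BorelSpace X]
    (T : ℝ) (hT : 0 < T)
    {ι : Type} [Countable ι]
    (F : ι → X → ℝ) (hF : ∀ i, Continuous (F i))
    (G : ι → ℝ → X → ℝ) (hG : ∀ i, Measurable (Function.uncurry (G i)))
    (B : ℝ → X → ℝ)
    (hBsup : ∀ t x, B t x = ⨆ i, |G i t x|)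
    (hGB : ∀ i t x, |G i t x| ≤ B t x)
    (𝔪 : Measure X) [IsProbabilityMeasure 𝔪]
    (p q : ℝ≥0∞) (hp : 1 ≤ p) (hpq : p⁻¹ + q⁻¹ = 1)
    (hBint : ∫⁻ t in Ioo 0 T, eLpNorm (B t) p 𝔪 < ∞)
    (u : ℝ → X → ℝ)
    (hu : ∃ M : ℝ≥0∞, M < ∞ ∧ ∀ t ∈ Icc 0 T, eLpNorm (u t) q 𝔪 ≤ M)
    (Ω : Type*) [MeasurableSpace Ω] (P : Measure Ω) [IsProbabilityMeasure P]
    (γ : Ω → ℝ → X)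
    (hγmeas : ∀ t, Measurable fun ω => γ ω t)
    (hγcont : ∀ ω, Continuous (γ ω))
    (hmarg : ∀ t ∈ Icc 0 T, Measure.map (fun ω => γ ω t) P
      = 𝔪.withDensity (fun x => ENNReal.ofReal (u t x)))
    (hconc : ∀ᵐ ω ∂P, ∀ (i : ι), ∀ s ∈ Icc 0 T, ∀ t ∈ Icc 0 T, s ≤ t →
      F i (γ ω t) - F i (γ ω s) = ∫ r in s..t, G i r (γ ω r)) :
    ∀ᵐ ω ∂P, ∀ s ∈ Icc 0 T, ∀ t ∈ Icc 0 T, s ≤ t →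
      (⨆ i : ι, ENNReal.ofReal |F i (γ ω s) - F i (γ ω t)|)
        ≤ ENNReal.ofReal (∫ r in s..t, B r (γ ω r)) := by
  obtain ⟨M, hM, huM⟩ := hu
  -- nonnegativity of B
  have hBnn : ∀ t x, 0 ≤ B t x := fun t x => by
    rw [hBsup]; exact Real.iSup_nonneg fun i => abs_nonneg _
  -- ofReal of B is the iSup of ofReal of |G i|
  have hofReal : ∀ t x, ENNReal.ofReal (B t x) = ⨆ i, ENNReal.ofReal |G i t x| := by
    intro t x
    apply le_antisymm
    · set c := ⨆ i, ENNReal.ofReal |G i t x| with hc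
      have hcle : c ≤ ENNReal.ofReal (B t x) :=
        iSup_le fun i => ENNReal.ofReal_le_ofReal (hGB i t x)
      have hcne : c ≠ ⊤ := ne_top_of_le_ne_top ENNReal.ofReal_ne_top hcle
      have h2 : ∀ i, |G i t x| ≤ c.toReal := by
        intro i
        have h3 : ENNReal.ofReal |G i t x| ≤ c := le_iSup (fun i => ENNReal.ofReal |G i t x|) i
        have := ENNReal.toReal_mono hcne h3
        rwa [ENNReal.toReal_ofReal (abs_nonneg _)] at this
      have h4 : B t x ≤ c.toReal := by
        rw [hBsup]; exact Real.iSup_le h2 ENNReal.toReal_nonneg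
      calc ENNReal.ofReal (B t x) ≤ ENNReal.ofReal c.toReal := ENNReal.ofReal_le_ofReal h4
        _ = c := ENNReal.ofReal_toReal hcne
    · exact iSup_le fun i => ENNReal.ofReal_le_ofReal (hGB i t x)
  -- measurability of B
  have hℬmeas : Measurable fun pr : ℝ × X => ENNReal.ofReal (B pr.1 pr.2) := by
    have h1 : (fun pr : ℝ × X => ENNReal.ofReal (B pr.1 pr.2))
        = fun pr : ℝ × X => ⨆ i, ENNReal.ofReal |G i pr.1 pr.2| := by
      funext pr; exact hofReal pr.1 pr.2
    rw [h1]
    exact Measurable.iSup fun i => ((hG i).abs).ennreal_ofReal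
  have hBmeas : Measurable (Function.uncurry B) := by
    have h1 : Function.uncurry B
        = fun pr : ℝ × X => (ENNReal.ofReal (B pr.1 pr.2)).toReal := by
      funext pr; exact (ENNReal.toReal_ofReal (hBnn pr.1 pr.2)).symm
    rw [h1]; exact hℬmeas.ennreal_toReal
  have hγjoint : Measurable fun pr : ℝ × Ω => γ pr.2 pr.1 :=
    measurable_uncurry_of_continuous_of_measurable
      (u := fun t ω => γ ω t) (fun ω => hγcont ω) hγmeas
  -- main finiteness estimate
  have hmeasΩ : Measurable fun pr : Ω × ℝ => ENNReal.ofReal (B pr.2 (γ pr.1 pr.2)) := by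
    have : (fun pr : Ω × ℝ => ENNReal.ofReal (B pr.2 (γ pr.1 pr.2)))
        = (fun pr : ℝ × X => ENNReal.ofReal (B pr.1 pr.2))
          ∘ (fun pr : Ω × ℝ => (pr.2, γ pr.1 pr.2)) := rfl
    rw [this]
    exact hℬmeas.comp ((measurable_snd).prodMk (hγjoint.comp measurable_swap))
  have inner_le : ∀ r ∈ Icc (0:ℝ) T,
      ∫⁻ ω, ENNReal.ofReal (B r (γ ω r)) ∂P ≤ M * eLpNorm (B r) p 𝔪 := by
    intro r hr
    have hBr : Measurable fun x => B r x := hBmeas.of_uncurry_left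
    have hℬr : Measurable fun x => ENNReal.ofReal (B r x) := hBr.ennreal_ofReal
    have h1 : ∫⁻ ω, ENNReal.ofReal (B r (γ ω r)) ∂P
        = ∫⁻ x, ENNReal.ofReal (B r x) ∂(Measure.map (fun ω => γ ω r) P) :=
      (lintegral_map hℬr (hγmeas r)).symm
    rw [h1, hmarg r hr]
    obtain ⟨g, hgm, hgle, hgeq⟩ :=
      exists_measurable_le_withDensity_eq 𝔪 (fun x => ENNReal.ofReal (u r x))
    rw [← hgeq, lintegral_withDensity_eq_lintegral_mul 𝔪 hgm hℬr]
    set v : X → ℝ := fun x => (g x).toReal with hv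
    have hgne : ∀ x, g x ≠ ⊤ := fun x =>
      ne_top_of_le_ne_top ENNReal.ofReal_ne_top (hgle x)
    have hgv : ∀ x, g x = ENNReal.ofReal (v x) := fun x =>
      (ENNReal.ofReal_toReal (hgne x)).symm
    have hvm : Measurable v := hgm.ennreal_toReal
    have hvnn : ∀ x, 0 ≤ v x := fun x => ENNReal.toReal_nonneg
    have hvle : ∀ x, ‖v x‖ ≤ ‖u r x‖ := by
      intro x
      have h2 : g x ≤ ENNReal.ofReal |u r x| :=
        (hgle x).trans (ENNReal.ofReal_le_ofReal (le_abs_self _))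
      have h3 := ENNReal.toReal_mono ENNReal.ofReal_ne_top h2
      rw [ENNReal.toReal_ofReal (abs_nonneg _)] at h3
      rw [Real.norm_eq_abs, Real.norm_eq_abs, abs_of_nonneg (hvnn x)]
      exact h3
    have key : ∫⁻ x, ((g : X → ℝ≥0∞) * fun x => ENNReal.ofReal (B r x)) x ∂𝔪
        = eLpNorm (fun x => v x * B r x) 1 𝔪 := by
      rw [eLpNorm_one_eq_lintegral_enorm]
      refine lintegral_congr fun x => ?_
      simp only [Pi.mul_apply]
      rw [hgv x, ← ENNReal.ofReal_mul (hvnn x),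
        Real.enorm_eq_ofReal (mul_nonneg (hvnn x) (hBnn r x))]
    rw [key]
    have hhold : eLpNorm (fun x => v x * B r x) 1 𝔪
        ≤ eLpNorm v q 𝔪 * eLpNorm (B r) p 𝔪 := by
      have hH : ENNReal.HolderTriple q p 1 := ⟨by rw [inv_one, ← hpq, add_comm]⟩
      have := eLpNorm_le_eLpNorm_mul_eLpNorm_of_nnnorm (μ := 𝔪) (p := q) (q := p) (r := 1)
        hvm.aestronglyMeasurable hBr.aestronglyMeasurable (fun a b => a * b) 1
        (Filter.Eventually.of_forall fun x => by simp [nnnorm_mul])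
      rwa [ENNReal.coe_one, one_mul] at this
    refine hhold.trans ?_
    exact mul_le_mul_left ((eLpNorm_mono hvle).trans (huM r hr)) _
  have hfin : ∫⁻ ω, (∫⁻ r in Ioo 0 T, ENNReal.ofReal (B r (γ ω r))) ∂P < ∞ := by
    have hswap : ∫⁻ ω, (∫⁻ r in Ioo 0 T, ENNReal.ofReal (B r (γ ω r))) ∂P
        = ∫⁻ r in Ioo 0 T, (∫⁻ ω, ENNReal.ofReal (B r (γ ω r)) ∂P) := by
      exact lintegral_lintegral_swap hmeasΩ.aemeasurable
    rw [hswap]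
    calc ∫⁻ r in Ioo 0 T, (∫⁻ ω, ENNReal.ofReal (B r (γ ω r)) ∂P)
        ≤ ∫⁻ r in Ioo 0 T, M * eLpNorm (B r) p 𝔪 := by
          refine lintegral_mono_ae ?_
          filter_upwards [ae_restrict_mem measurableSet_Ioo] with r hr
          exact inner_le r ⟨le_of_lt hr.1, le_of_lt hr.2⟩
      _ = M * ∫⁻ r in Ioo 0 T, eLpNorm (B r) p 𝔪 :=
          lintegral_const_mul' M _ hM.ne
      _ < ∞ := ENNReal.mul_lt_top hM hBint
  have haefin : ∀ᵐ ω ∂P, (∫⁻ r in Ioo 0 T, ENNReal.ofReal (B r (γ ω r))) < ∞ := by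
    refine ae_lt_top ?_ hfin.ne
    exact hmeasΩ.lintegral_prod_right'
  filter_upwards [hconc, haefin] with ω hω hωfin
  intro s hs t ht hst
  -- integrability of r ↦ B r (γ ω r) on Icc 0 T
  have hmeasr : Measurable fun r => B r (γ ω r) :=
    hBmeas.comp (measurable_id.prodMk (hγcont ω).measurable)
  have hIoo : IntegrableOn (fun r => B r (γ ω r)) (Ioo 0 T) := by
    refine ⟨hmeasr.aestronglyMeasurable.restrict, ?_⟩
    rw [hasFiniteIntegral_iff_ofReal (Filter.Eventually.of_forall fun r => hBnn _ _)]
    exact hωfin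
  have hIcc : IntegrableOn (fun r => B r (γ ω r)) (Icc 0 T) := by
    rw [IntegrableOn, ← Measure.restrict_congr_set Ioo_ae_eq_Icc]
    exact hIoo
  have hsub : Ioc s t ⊆ Icc 0 T := fun x hx =>
    ⟨hs.1.trans (le_of_lt hx.1), hx.2.trans ht.2⟩
  have hBII : IntervalIntegrable (fun r => B r (γ ω r)) volume s t := by
    rw [intervalIntegrable_iff_integrableOn_Ioc_of_le hst]
    exact hIcc.mono_set hsub
  refine iSup_le fun i => ENNReal.ofReal_le_ofReal ?_
  have hGmeasr : Measurable fun r => G i r (γ ω r) :=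
    (hG i).comp (measurable_id.prodMk (hγcont ω).measurable)
  have hGII : IntervalIntegrable (fun r => G i r (γ ω r)) volume s t := by
    rw [intervalIntegrable_iff_integrableOn_Ioc_of_le hst]
    refine Integrable.mono (hIcc.mono_set hsub) hGmeasr.aestronglyMeasurable.restrict ?_
    refine Filter.Eventually.of_forall fun r => ?_
    rw [Real.norm_eq_abs, Real.norm_eq_abs, abs_of_nonneg (hBnn _ _)]
    exact hGB i r (γ ω r)
  have h5 : |F i (γ ω s) - F i (γ ω t)| = |∫ r in s..t, G i r (γ ω r)| := by
    rw [abs_sub_comm, hω i s hs t ht hst]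
  rw [h5]
  calc |∫ r in s..t, G i r (γ ω r)| ≤ ∫ r in s..t, |G i r (γ ω r)| :=
        intervalIntegral.abs_integral_le_integral_abs hst
    _ ≤ ∫ r in s..t, B r (γ ω r) := by
        refine intervalIntegral.integral_mono_on hst hGII.abs hBII fun x hx => hGB i x (γ ω x)
end
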